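/- Let H be a complex Hilbert space with inner product ⟨·,·⟩ conjugate-linear in the first variable, let f ∈ H, let N ≥ 1 and let g₁, …, g_N ∈ H. Then there exist complex numbers c₁, …, c_N with ∑_{i=1}^N |c_i|² = 1 such that ∑_{i=1}^N |⟨f, g_i⟩|² ≤ ‖f‖² · ∑_{i=1}^N ∑_{j=1}^N c_i·conj(c_j)·⟨g_i, g_j⟩. (The double sum equals ‖∑_{j=1}^N conj(c_j)·g_j‖², so in particular it is a nonnegative real number.) -/

import Mathlib

open scoped ComplexConjugate
open Finset

private lemma double_sum_eq {H : Type*} [NormedAddCommGroup H] [InnerProductSpace ℂ H]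
    {N : ℕ} (c : Fin N → ℂ) (g : Fin N → H) :
    (∑ i, ∑ j, c i * conj (c j) * (inner ℂ (g i) (g j) : ℂ))
      = ((‖∑ j, conj (c j) • g j‖ ^ 2 : ℝ) : ℂ) := by
  have this1 := inner_self_eq_norm_sq_to_K (𝕜 := ℂ) (∑ j, conj (c j) • g j)
  have h2 : (∑ i, ∑ j, c i * conj (c j) * (inner ℂ (g i) (g j) : ℂ))
      = (inner ℂ (∑ j, conj (c j) • g j) (∑ j, conj (c j) • g j) : ℂ) := by
    rw [sum_inner]
    refine Finset.sum_congr rfl fun i _ => ?_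
    rw [inner_sum]
    refine Finset.sum_congr rfl fun j _ => ?_
    rw [inner_smul_left, inner_smul_right, starRingEnd_self_apply]
    ring
  rw [h2, this1]
  norm_cast

set_option maxHeartbeats 1000000 in
theorem tt_star_lemma
    {H : Type*} [NormedAddCommGroup H] [InnerProductSpace ℂ H]
    (f : H) (N : ℕ) (hN : 1 ≤ N) (g : Fin N → H) :
    ∃ c : Fin N → ℂ,
      (∑ i, ‖c i‖ ^ 2) = 1 ∧
      ((∑ i, ∑ j, c i * conj (c j) * (inner ℂ (g i) (g j) : ℂ))
          = ((‖∑ j, conj (c j) • g j‖ ^ 2 : ℝ) : ℂ)) ∧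
      (∑ i, ‖(inner ℂ f (g i) : ℂ)‖ ^ 2)
        ≤ ‖f‖ ^ 2 * (∑ i, ∑ j, c i * conj (c j) * (inner ℂ (g i) (g j) : ℂ)).re := by
  set a : Fin N → ℂ := fun i => (inner ℂ f (g i) : ℂ) with ha
  set T : ℝ := ∑ i, ‖a i‖ ^ 2 with hT
  have hTnn : 0 ≤ T := Finset.sum_nonneg fun i _ => sq_nonneg _
  by_cases hT0 : T = 0
  · -- degenerate case
    refine ⟨fun i => if i = ⟨0, hN⟩ then 1 else 0, ?_, double_sum_eq _ _, ?_⟩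
    · simp [apply_ite (fun x : ℂ => ‖x‖)]
    · rw [hT0, double_sum_eq]
      simp only [Complex.ofReal_re]
      positivity
  · have hTpos : 0 < T := lt_of_le_of_ne hTnn (Ne.symm hT0)
    set S : ℝ := Real.sqrt T with hS
    have hSpos : 0 < S := Real.sqrt_pos.mpr hTpos
    have hS2 : S ^ 2 = T := Real.sq_sqrt hTnn
    set c : Fin N → ℂ := fun i => a i / (S : ℂ) with hc
    have hsum : (∑ i, ‖c i‖ ^ 2) = 1 := by
      have h1 : ∀ i, ‖c i‖ ^ 2 = ‖a i‖ ^ 2 / S ^ 2 := by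
        intro i
        simp [hc, norm_div, Complex.norm_real, abs_of_pos hSpos, div_pow]
      rw [Finset.sum_congr rfl fun i _ => h1 i, ← Finset.sum_div, ← hT, hS2,
        div_self hT0]
    refine ⟨c, hsum, double_sum_eq _ _, ?_⟩
    rw [double_sum_eq]
    simp only [Complex.ofReal_re]
    set v : H := ∑ j, conj (c j) • g j with hv
    have hfv : (inner ℂ f v : ℂ) = (T : ℂ) / (S : ℂ) := by
      rw [hv, inner_sum]
      have h2 : ∀ j, (inner ℂ f (conj (c j) • g j) : ℂ)
          = ((‖a j‖ ^ 2 : ℝ) : ℂ) / (S : ℂ) := by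
        intro j
        rw [inner_smul_right, hc]
        simp only [map_div₀, Complex.conj_ofReal]
        have haj : (inner ℂ f (g j) : ℂ) = a j := rfl
        rw [haj, div_mul_eq_mul_div, mul_comm, Complex.mul_conj, ← Complex.normSq_eq_norm_sq]
      rw [Finset.sum_congr rfl fun j _ => h2 j, ← Finset.sum_div]
      norm_cast
    have hcs : ‖(inner ℂ f v : ℂ)‖ ≤ ‖f‖ * ‖v‖ := by
      simpa using norm_inner_le_norm (𝕜 := ℂ) f v
    have habs : ‖((T:ℂ) / (S:ℂ))‖ = T / S := by
      rw [norm_div, Complex.norm_real, Complex.norm_real, Real.norm_eq_abs, Real.norm_eq_abs, abs_of_nonneg hTnn,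
        abs_of_nonneg hSpos.le]
    have hcs' : T / S ≤ ‖f‖ * ‖v‖ := by rw [← habs, ← hfv]; exact hcs
    have hdiv : 0 ≤ T / S := div_nonneg hTnn hSpos.le
    have hmul : (T / S) * (T / S) ≤ (‖f‖ * ‖v‖) * (‖f‖ * ‖v‖) :=
      mul_le_mul hcs' hcs' hdiv (le_trans hdiv hcs')
    have hTS : (T / S) * (T / S) = T := by
      rw [div_mul_div_comm, ← sq, ← sq, hS2, sq, mul_div_assoc, div_self hT0, mul_one]
    calc (∑ i, ‖(inner ℂ f (g i) : ℂ)‖ ^ 2) = T := rfl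
      _ = (T / S) * (T / S) := hTS.symm
      _ ≤ (‖f‖ * ‖v‖) * (‖f‖ * ‖v‖) := hmul
      _ = ‖f‖ ^ 2 * ‖v‖ ^ 2 := by ring
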